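/- If μ is a fuzzy two-sided ideal of a regular AG-groupoid S with left identity, then μ(a*b) = μ(b*a) for all a, b in S. -/
import Mathlib

/-- For a fuzzy two-sided ideal μ of a regular AG-groupoid with left
    identity, μ(a*b) = μ(b*a). -/
theorem fuzzy_ideal_comm {S : Type*} (mul : S → S → S)
    (hinv : ∀ a b c : S, mul (mul a b) c = mul (mul c b) a)
    (e : S) (he : ∀ x : S, mul e x = x)
    (hreg : ∀ a : S, ∃ x : S, a = mul (mul a x) a)
    (μ : S → ℝ) (hμ0 : ∀ x, 0 ≤ μ x) (hμ1 : ∀ x, μ x ≤ 1)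
    (hr : ∀ x y : S, μ x ≤ μ (mul x y))
    (hl : ∀ x y : S, μ y ≤ μ (mul x y)) :
    ∀ a b : S, μ (mul a b) = μ (mul b a) := by
  have key : ∀ a b : S, μ (mul a b) ≤ μ (mul b a) := by
    intro a b
    have h : mul b a = mul (mul a b) e := by
      rw [hinv a b e, he]
    rw [h]
    exact hr _ _
  intro a b
  exact le_antisymm (key a b) (key b a)
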